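/- For every connected graph G with at least 2 vertices, the minimum size of a connecting transition set of G equals the minimum cost of a connecting hypergraph of G. -/

import Mathlib

variable {V : Type*}

/-- The transition consisting of the edges `ab` and `bc`, written `abc`. -/
def transitionOf (a b c : V) : Sym2 (Sym2 V) := s(s(a, b), s(b, c))

/-- `t` is a transition of `G`: an unordered pair of two distinct adjacent edges. -/
def SimpleGraph.IsTransition (G : SimpleGraph V) (t : Sym2 (Sym2 V)) : Prop :=
  ∃ a b c, G.Adj a b ∧ G.Adj b c ∧ a ≠ c ∧ t = transitionOf a b c

/-- A list of vertices (the support of a walk) is `T`-compatible: every pair of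
consecutive edges is either a transition of `T` or a backtrack. -/
def TCompatible (T : Set (Sym2 (Sym2 V))) (l : List V) : Prop :=
  ∀ (i : ℕ) (h : i + 2 < l.length),
    l[i]'(by omega) = l[i + 2]'h ∨
    transitionOf (l[i]'(by omega)) (l[i + 1]'(by omega)) (l[i + 2]'h) ∈ T

/-- `G` is `T`-connected: every two vertices are joined by a `T`-compatible walk. -/
def SimpleGraph.TConnected (G : SimpleGraph V) (T : Set (Sym2 (Sym2 V))) : Prop :=
  ∀ u v : V, ∃ p : G.Walk u v, TCompatible T p.support

/-- `T` is a connecting transition set of `G`. -/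
def SimpleGraph.ConnectingTransitionSet (G : SimpleGraph V)
    (T : Finset (Sym2 (Sym2 V))) : Prop :=
  (∀ t ∈ T, G.IsTransition t) ∧ G.TConnected ↑T

/-- `H` is a connecting hypergraph of `G`: every hyperedge has at least two vertices and
induces a connected subgraph, and every pair of distinct non-adjacent vertices is
contained in a common hyperedge. -/
def SimpleGraph.ConnectingHypergraph (G : SimpleGraph V) (H : Finset (Finset V)) : Prop :=
  (∀ E ∈ H, 2 ≤ E.card ∧ (G.induce (E : Set V)).Connected) ∧
  ∀ u v : V, u ≠ v → ¬G.Adj u v → ∃ E ∈ H, u ∈ E ∧ v ∈ E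

/-- The cost of a hypergraph: the sum over hyperedges of (size − 2). -/
def hcost (H : Finset (Finset V)) : ℕ := ∑ E ∈ H, (E.card - 2)

lemma transitionOf_comm (a b c : V) : transitionOf c b a = transitionOf a b c := by
  unfold transitionOf
  rw [Sym2.eq_swap, show s(c,b) = s(b,c) from Sym2.eq_swap, show s(b,a) = s(a,b) from Sym2.eq_swap]

lemma getElem_idx_congr {α : Type*} {l : List α} {i j : ℕ} (hij : i = j) {h : i < l.length} :
    l[i]'h = l[j]'(hij ▸ h) := by subst hij; rfl

lemma TCompatible.mono {T T' : Set (Sym2 (Sym2 V))} {l : List V} (h : T ⊆ T')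
    (hl : TCompatible T l) : TCompatible T' l := by
  intro i hi
  rcases hl i hi with h1 | h1
  · exact Or.inl h1
  · exact Or.inr (h h1)

lemma TCompatible.short {T : Set (Sym2 (Sym2 V))} {l : List V} (h : l.length ≤ 2) :
    TCompatible T l := by
  intro i hi; omega

lemma TCompatible.prefix {T : Set (Sym2 (Sym2 V))} {l1 l2 : List V}
    (h : TCompatible T (l1 ++ l2)) : TCompatible T l1 := by
  intro i hi
  have hL : i + 2 < (l1 ++ l2).length := by simp; omega
  have := h i hL
  rwa [List.getElem_append_left (by omega), List.getElem_append_left (by omega),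
    List.getElem_append_left (by omega)] at this

lemma TCompatible.suffix {T : Set (Sym2 (Sym2 V))} {l1 l2 : List V}
    (h : TCompatible T (l1 ++ l2)) : TCompatible T l2 := by
  intro i hi
  have hL : (i + l1.length) + 2 < (l1 ++ l2).length := by simp; omega
  have := h (i + l1.length) hL
  rw [List.getElem_append_right (by omega), List.getElem_append_right (by omega),
    List.getElem_append_right (by omega)] at this
  rcases this with h1 | h1
  · left
    rw [← getElem_idx_congr (show i + l1.length - l1.length = i by omega),
      ← getElem_idx_congr (show i + l1.length + 2 - l1.length = i + 2 by omega)]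
    exact h1
  · right
    rw [← getElem_idx_congr (show i + l1.length - l1.length = i by omega),
      ← getElem_idx_congr (show i + l1.length + 1 - l1.length = i + 1 by omega),
      ← getElem_idx_congr (show i + l1.length + 2 - l1.length = i + 2 by omega)]
    exact h1

lemma TCompatible.reverse {T : Set (Sym2 (Sym2 V))} {l : List V}
    (h : TCompatible T l) : TCompatible T l.reverse := by
  intro i hi
  have hlen : l.reverse.length = l.length := l.length_reverse
  have hj : (l.length - 3 - i) + 2 < l.length := by omega
  have := h (l.length - 3 - i) hj
  rw [List.getElem_reverse, List.getElem_reverse, List.getElem_reverse]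
  have e0 : l.length - 1 - i = (l.length - 3 - i) + 2 := by omega
  have e1 : l.length - 1 - (i+1) = (l.length - 3 - i) + 1 := by omega
  have e2 : l.length - 1 - (i+2) = (l.length - 3 - i) := by omega
  rcases this with h1 | h1
  · left
    rw [getElem_idx_congr e0, getElem_idx_congr e2]
    exact h1.symm
  · right
    rw [getElem_idx_congr e0, getElem_idx_congr e1, getElem_idx_congr e2, transitionOf_comm]
    exact h1

lemma TCompatible.glue {T : Set (Sym2 (Sym2 V))} {l1 l2 : List V}
    (h1 : TCompatible T l1) (h2 : TCompatible T l2)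
    (hne1 : l1 ≠ []) (hne2 : l2 ≠ [])
    (hov : l1.getLast hne1 = l2.head hne2)
    (hj : ∀ (ha : 2 ≤ l1.length) (hb : 2 ≤ l2.length),
      l1[l1.length - 2]'(by omega) = l2[1]'(by omega) ∨
      transitionOf (l1[l1.length - 2]'(by omega)) (l2.head hne2) (l2[1]'(by omega)) ∈ T) :
    TCompatible T (l1 ++ l2.tail) := by
  have hn1 : 1 ≤ l1.length := List.length_pos_iff.mpr hne1
  have hn2 : 1 ≤ l2.length := List.length_pos_iff.mpr hne2
  have hLlen : (l1 ++ l2.tail).length = l1.length + (l2.length - 1) := by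
    simp [List.length_append]
  have hA : ∀ (k : ℕ) (hk : k < l1.length) (hk' : k < (l1 ++ l2.tail).length),
      (l1 ++ l2.tail)[k]'hk' = l1[k]'hk := by
    intro k hk hk'
    exact List.getElem_append_left hk
  have hB : ∀ (k : ℕ) (hk1 : l1.length - 1 ≤ k) (hk2 : k + 1 - l1.length < l2.length)
      (hk' : k < (l1 ++ l2.tail).length),
      (l1 ++ l2.tail)[k]'hk' = l2[k + 1 - l1.length]'hk2 := by
    intro k hk1 hk2 hk'
    rcases Nat.lt_or_ge k l1.length with hlt | hge
    · have hk : k = l1.length - 1 := by omega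
      rw [hA k hlt hk']
      have : l1[k]'hlt = l1.getLast hne1 := by
        rw [List.getLast_eq_getElem]
        exact getElem_idx_congr (by omega)
      rw [this, hov, List.head_eq_getElem]
      exact getElem_idx_congr (by omega)
    · rw [List.getElem_append_right hge, List.getElem_tail]
      exact getElem_idx_congr (by omega)
  intro i hi
  rcases Nat.lt_or_ge (i + 2) l1.length with hlt | hge
  · rw [hA i (by omega) _, hA (i+1) (by omega) _, hA (i+2) (by omega) _]
    exact h1 i hlt
  rcases Nat.lt_or_ge i (l1.length - 1) with hilt | hige
  · -- i = l1.length - 2, the junction triple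
    have hn1' : 2 ≤ l1.length := by omega
    have hieq : i = l1.length - 2 := by omega
    have hn2' : 2 ≤ l2.length := by
      rw [hLlen] at hi; omega
    rw [hA i (by omega) _, hB (i+1) (by omega) (by omega) _, hB (i+2) (by omega) (by omega) _]
    have e1 : l1[i]'(by omega) = l1[l1.length - 2]'(by omega) := getElem_idx_congr hieq
    have e2 : l2[i + 1 + 1 - l1.length]'(by omega) = l2.head hne2 := by
      rw [List.head_eq_getElem]
      exact getElem_idx_congr (by omega)
    have e3 : l2[i + 2 + 1 - l1.length]'(by omega) = l2[1]'(by omega) :=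
      getElem_idx_congr (by omega)
    rw [e1, e2, e3]
    exact hj hn1' hn2'
  · -- entirely inside l2
    have hlen2 : i + 2 + 1 - l1.length < l2.length := by rw [hLlen] at hi; omega
    rw [hB i hige (by omega) _, hB (i+1) (by omega) (by omega) _, hB (i+2) (by omega) hlen2 _]
    have := h2 (i + 1 - l1.length) (by omega)
    rcases this with h' | h'
    · left
      rw [getElem_idx_congr (show i + 1 - l1.length = i + 1 - l1.length from rfl),
        getElem_idx_congr (show i + 2 + 1 - l1.length = i + 1 - l1.length + 2 by omega)]
      exact h'
    · right
      rw [getElem_idx_congr (show i + 1 + 1 - l1.length = i + 1 - l1.length + 1 by omega),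
        getElem_idx_congr (show i + 2 + 1 - l1.length = i + 1 - l1.length + 2 by omega)]
      exact h'

open SimpleGraph

variable {G : SimpleGraph V}

lemma support_decomp [DecidableEq V] {a b w : V} (p : G.Walk a b) (hw : w ∈ p.support) :
    p.support = (p.takeUntil w hw).support ++ (p.dropUntil w hw).support.tail := by
  conv_lhs => rw [← p.take_spec hw]
  rw [Walk.support_append]

lemma List.append_tail_eq' {α : Type*} (l1 l2 : List α) (h1 : l1 ≠ []) (h2 : l2 ≠ [])
    (h : l1.getLast h1 = l2.head h2) : l1 ++ l2.tail = l1.dropLast ++ l2 := by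
  conv_lhs => rw [← List.dropLast_append_getLast h1]
  conv_rhs => rw [← List.cons_head_tail h2]
  rw [h]
  simp

lemma support_decomp' [DecidableEq V] {a b w : V} (p : G.Walk a b) (hw : w ∈ p.support) :
    p.support = (p.takeUntil w hw).support.dropLast ++ (p.dropUntil w hw).support := by
  rw [support_decomp p hw]
  refine List.append_tail_eq' _ _ (Walk.support_ne_nil _) (Walk.support_ne_nil _) ?_
  rw [Walk.getLast_support, Walk.head_support]

lemma TCompatible.takeUntil [DecidableEq V] {T : Set (Sym2 (Sym2 V))} {a b w : V} {p : G.Walk a b}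
    (hp : TCompatible T p.support) (hw : w ∈ p.support) :
    TCompatible T (p.takeUntil w hw).support := by
  rw [support_decomp p hw] at hp
  exact hp.prefix

lemma TCompatible.dropUntil [DecidableEq V] {T : Set (Sym2 (Sym2 V))} {a b w : V} {p : G.Walk a b}
    (hp : TCompatible T p.support) (hw : w ∈ p.support) :
    TCompatible T (p.dropUntil w hw).support := by
  rw [support_decomp' p hw] at hp
  exact hp.suffix

lemma TCompatible.walkReverse {T : Set (Sym2 (Sym2 V))} {a b : V} {p : G.Walk a b}
    (hp : TCompatible T p.support) : TCompatible T p.reverse.support := by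
  rw [Walk.support_reverse]
  exact hp.reverse

lemma exists_compatible_subwalk [DecidableEq V] {T : Set (Sym2 (Sym2 V))} {a b u v : V} (p : G.Walk a b)
    (hp : TCompatible T p.support) (hu : u ∈ p.support) (hv : v ∈ p.support) :
    ∃ q : G.Walk u v, TCompatible T q.support := by
  classical
  by_cases hv2 : v ∈ (p.dropUntil u hu).support
  · exact ⟨(p.dropUntil u hu).takeUntil v hv2, (hp.dropUntil hu).takeUntil hv2⟩
  · have hv1 : v ∈ (p.takeUntil u hu).support := by
      rw [support_decomp p hu] at hv
      rcases List.mem_append.mp hv with h | h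
      · exact h
      · exact absurd (List.mem_of_mem_tail h) hv2
    have hv1' : v ∈ (p.takeUntil u hu).reverse.support := by
      rw [Walk.support_reverse]; exact List.mem_reverse.mpr hv1
    exact ⟨((p.takeUntil u hu).reverse).takeUntil v hv1',
      ((hp.takeUntil hu).walkReverse).takeUntil hv1'⟩

lemma walk_adj_index {a b : V} (p : G.Walk a b) (i : ℕ) (h : i + 1 < p.support.length) :
    G.Adj (p.support[i]'(by omega)) (p.support[i+1]'h) := by
  have := Walk.isChain_adj_support p
  rw [List.isChain_iff_getElem] at this
  have h' := this i (by omega)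
  simpa using h'

lemma walk_transition {a b : V} (p : G.Walk a b) (i : ℕ) (h3 : i + 2 < p.support.length)
    (hne : p.support[i]'(by omega) ≠ p.support[i+2]'h3) :
    G.IsTransition (transitionOf (p.support[i]'(by omega)) (p.support[i+1]'(by omega))
      (p.support[i+2]'h3)) :=
  ⟨_, _, _, walk_adj_index p i (by omega),
    (by simpa using walk_adj_index p (i+1) (by omega)), hne, rfl⟩

def induceValHom (S : Set V) : G.induce S →g G :=
  ⟨Subtype.val, fun {_ _} h => h⟩

lemma induce_reachable_of_walk {S : Set V} {a b : V} (p : G.Walk a b)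
    (hS : ∀ y ∈ p.support, y ∈ S) (ha : a ∈ S) (hb : b ∈ S) :
    (G.induce S).Reachable ⟨a, ha⟩ ⟨b, hb⟩ := by
  induction p with
  | nil => rfl
  | @cons a c b h q IH =>
    have hc : c ∈ S := hS c (by simp [Walk.support_cons])
    have hq : ∀ y ∈ q.support, y ∈ S := fun y hy => hS y (by simp [Walk.support_cons, hy])
    exact Reachable.trans
      (SimpleGraph.Adj.reachable (show (G.induce S).Adj ⟨a, ha⟩ ⟨c, hc⟩ from h))
      (IH hq hc hb)

lemma induce_connected_of_walks {S : Set V} {x0 : V} (hx0 : x0 ∈ S)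
    (h : ∀ x ∈ S, ∃ p : G.Walk x0 x, ∀ y ∈ p.support, y ∈ S) :
    (G.induce S).Connected := by
  have : Nonempty ↑S := ⟨⟨x0, hx0⟩⟩
  refine ⟨?_⟩
  rintro ⟨u, hu⟩ ⟨v, hv⟩
  obtain ⟨pu, hpu⟩ := h u hu
  obtain ⟨pv, hpv⟩ := h v hv
  exact (induce_reachable_of_walk pu hpu hx0 hu).symm.trans
    (induce_reachable_of_walk pv hpv hx0 hv)

lemma walk_in_of_induce_connected {S : Set V} (h : (G.induce S).Connected)
    {a b : V} (ha : a ∈ S) (hb : b ∈ S) :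
    ∃ p : G.Walk a b, ∀ y ∈ p.support, y ∈ S := by
  obtain ⟨q⟩ := h.preconnected ⟨a, ha⟩ ⟨b, hb⟩
  refine ⟨q.map (induceValHom S), ?_⟩
  intro y hy
  replace hy : y ∈ q.support.map (induceValHom (G := G) S) := by rw [← Walk.support_map]; exact hy
  obtain ⟨z, _, rfl⟩ := List.mem_map.mp hy
  exact z.2

lemma exists_noncut [DecidableEq V] {S : Finset V} (h2 : 2 ≤ S.card)
    (hconn : (G.induce (↑S : Set V)).Connected) :
    ∃ u ∈ S, (G.induce (↑(S \ {u}) : Set V)).Connected := by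
  classical
  have hSne : S.Nonempty := Finset.card_pos.mp (by omega)
  obtain ⟨v0, hv0⟩ := hSne
  set D : V → Set ℕ :=
    fun x => {n | ∃ p : G.Walk v0 x, (∀ y ∈ p.support, y ∈ S) ∧ p.length = n} with hD
  have hDne : ∀ x ∈ S, (D x).Nonempty := by
    intro x hx
    obtain ⟨p, hp⟩ := walk_in_of_induce_connected hconn
      (Finset.mem_coe.mpr hv0) (Finset.mem_coe.mpr hx)
    exact ⟨p.length, p, fun y hy => Finset.mem_coe.mp (hp y hy), rfl⟩
  set d : V → ℕ := fun x => sInf (D x) with hd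
  obtain ⟨u, hu, hmax⟩ := S.exists_max_image d (⟨v0, hv0⟩ : S.Nonempty)
  have hdv0 : d v0 = 0 := by
    have : (0 : ℕ) ∈ D v0 := ⟨Walk.nil, by simp [hv0], rfl⟩
    exact Nat.le_antisymm (Nat.sInf_le this) (Nat.zero_le _)
  have huv0 : u ≠ v0 := by
    intro hequ
    subst hequ
    have hall : ∀ x ∈ S, x = u := by
      intro x hx
      have hdx : d x = 0 := Nat.le_antisymm (by rw [← hdv0]; exact hmax x hx) (Nat.zero_le _)
      obtain ⟨p, _, hlen⟩ := Nat.sInf_mem (hDne x hx)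
      have hlen0 : p.length = 0 := by rw [hlen]; exact hdx
      exact (Walk.eq_of_length_eq_zero hlen0).symm
    have : S ⊆ {u} := fun x hx => Finset.mem_singleton.mpr (hall x hx)
    have := Finset.card_le_card this
    simp at this; omega
  have key : ∀ x ∈ S \ {u}, ∃ p : G.Walk v0 x, ∀ y ∈ p.support, y ∈ S \ {u} := by
    intro x hx
    obtain ⟨hxS, hxu⟩ := Finset.mem_sdiff.mp hx
    obtain ⟨p, hpS, hplen⟩ := Nat.sInf_mem (hDne x hxS)
    have hup : u ∉ p.support := by
      intro hus
      have hsplit : (p.takeUntil u hus).length + (p.dropUntil u hus).length = p.length := by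
        conv_rhs => rw [← p.take_spec hus]
        rw [Walk.length_append]
      have h1 : d u ≤ (p.takeUntil u hus).length :=
        Nat.sInf_le ⟨p.takeUntil u hus,
          fun y hy => hpS y (p.support_takeUntil_subset hus hy), rfl⟩
      have h2 : 1 ≤ (p.dropUntil u hus).length := by
        by_contra hcon
        push_neg at hcon
        have : (p.dropUntil u hus).length = 0 := by omega
        exact (Finset.notMem_singleton.mp hxu).symm (Walk.eq_of_length_eq_zero this)
      have h3 : d x ≤ d u := hmax x hxS
      have hplen' : p.length = d x := hplen
      omega
    exact ⟨p, fun y hy => Finset.mem_sdiff.mpr ⟨hpS y hy, by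
      simp only [Finset.mem_singleton]
      rintro rfl
      exact hup hy⟩⟩
  refine ⟨u, hu, ?_⟩
  have hv0' : v0 ∈ (↑(S \ {u}) : Set V) :=
    Finset.mem_coe.mpr (Finset.mem_sdiff.mpr ⟨hv0, Finset.notMem_singleton.mpr huv0.symm⟩)
  refine induce_connected_of_walks hv0' ?_
  intro x hx
  obtain ⟨p, hp⟩ := key x (Finset.mem_coe.mp hx)
  exact ⟨p, fun y hy => Finset.mem_coe.mpr (hp y hy)⟩

lemma exists_spanning_walk [DecidableEq V] :
    ∀ (n : ℕ) (S : Finset V), S.card = n → 2 ≤ S.card →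
    (G.induce (↑S : Set V)).Connected →
    ∃ (T : Finset (Sym2 (Sym2 V))), T.card + 2 ≤ S.card ∧ (∀ t ∈ T, G.IsTransition t) ∧
      ∃ (a b : V) (p : G.Walk a b), (∀ x ∈ S, x ∈ p.support) ∧ TCompatible ↑T p.support := by
  intro n
  induction n using Nat.strong_induction_on with
  | _ n IH =>
  intro S hn h2 hconn
  rcases eq_or_lt_of_le h2 with hcard2 | hcard3
  · -- S.card = 2
    obtain ⟨a, b, hab, rfl⟩ := Finset.card_eq_two.mp hcard2.symm
    have ha : a ∈ ({a, b} : Finset V) := by simp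
    have hb : b ∈ ({a, b} : Finset V) := by simp
    obtain ⟨p, hp⟩ := walk_in_of_induce_connected hconn (Finset.mem_coe.mpr ha)
      (Finset.mem_coe.mpr hb)
    have hadj : G.Adj a b := by
      cases p with
      | nil => exact absurd rfl hab
      | cons h q =>
        rename_i c
        have hc : c ∈ ({a, b} : Finset V) := by
          have := hp c (by simp [Walk.support_cons, Walk.start_mem_support])
          exact Finset.mem_coe.mp this
        rcases Finset.mem_insert.mp hc with rfl | hc
        · exact absurd rfl h.ne
        · rwa [Finset.mem_singleton.mp hc] at h
    refine ⟨∅, by simpa using h2, by simp, a, b, Walk.cons hadj Walk.nil, ?_, ?_⟩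
    · intro x hx
      rcases Finset.mem_insert.mp hx with rfl | hx
      · simp
      · simp [Finset.mem_singleton.mp hx]
    · exact TCompatible.short (by simp)
  · -- S.card ≥ 3
    obtain ⟨u, huS, hconn'⟩ := exists_noncut h2 hconn
    set S' := S \ {u} with hS'
    have hcardS' : S'.card = S.card - 1 := by
      rw [hS', Finset.card_sdiff_of_subset (Finset.singleton_subset_iff.mpr huS)]
      simp
    have h2' : 2 ≤ S'.card := by omega
    obtain ⟨Ti, hTicard, hTitr, a, b, W, hWcover, hWcompat⟩ :=
      IH S'.card (by omega) S' rfl h2' hconn'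
    -- find a neighbor w of u inside S'
    obtain ⟨v', hv'⟩ : ∃ v', v' ∈ S' := (Finset.card_pos.mp (by omega)).imp (fun _ h => h)
    have hv'S : v' ∈ S := (Finset.mem_sdiff.mp hv').1
    have hv'u : v' ≠ u := by
      have := (Finset.mem_sdiff.mp hv').2; simpa using this
    obtain ⟨p0, hp0⟩ := walk_in_of_induce_connected hconn (Finset.mem_coe.mpr huS)
      (Finset.mem_coe.mpr hv'S)
    obtain ⟨w, huw, hwS'⟩ : ∃ w, G.Adj u w ∧ w ∈ S' := by
      cases p0 with
      | nil => exact absurd rfl hv'u.symm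
      | cons h q =>
        rename_i c
        refine ⟨c, h, Finset.mem_sdiff.mpr ⟨?_, ?_⟩⟩
        · exact Finset.mem_coe.mp (hp0 c (by simp [Walk.support_cons, Walk.start_mem_support]))
        · simpa using h.ne'
    have hw : w ∈ W.support := hWcover w hwS'
    set p1 := W.takeUntil w hw with hp1
    set R := p1.reverse.append W with hR
    -- length facts
    have hlenW : 2 ≤ W.support.length := by
      obtain ⟨x, hx, y, hy, hxy⟩ := Finset.one_lt_card.mp (by omega : 1 < S'.card)
      have hxs := hWcover x hx
      have hys := hWcover y hy
      rcases hsup : W.support with _ | ⟨z, _ | ⟨z', l⟩⟩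
      · exact absurd hsup (Walk.support_ne_nil W)
      · rw [hsup] at hxs hys
        simp at hxs hys
        exact absurd (hxs.trans hys.symm) hxy
      · simp
    have hRsup : R.support = p1.reverse.support ++ W.support.tail := Walk.support_append _ _
    have hlenR : 2 ≤ R.support.length := by
      rw [hRsup]
      have := Walk.support_ne_nil p1.reverse
      have h1 : 1 ≤ p1.reverse.support.length := List.length_pos_iff.mpr this
      have h2 : 1 ≤ W.support.tail.length := by
        rw [List.length_tail]; omega
      rw [List.length_append]; omega
    -- compatibility of R w.r.t. Ti
    have hcompatR : TCompatible ↑Ti R.support := by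
      rw [hRsup]
      refine TCompatible.glue ((hWcompat.takeUntil hw).walkReverse) hWcompat
        (Walk.support_ne_nil _) (Walk.support_ne_nil _) ?_ ?_
      · rw [Walk.getLast_support, Walk.head_support]
      · intro ha hb
        left
        have hrl : p1.reverse.support = p1.support.reverse := Walk.support_reverse _
        have hL : p1.reverse.support.length = p1.support.length := by
          rw [hrl, List.length_reverse]
        have hm : 2 ≤ p1.support.length := by omega
        have e1 : p1.reverse.support[p1.reverse.support.length - 2]'(by omega) =
            p1.support[1]'(by omega) := by
          rw [List.getElem_of_eq hrl, List.getElem_reverse]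
          exact getElem_idx_congr (by omega)
        have e2 : W.support[1]'(by omega) = p1.support[1]'(by omega) := by
          rw [List.getElem_of_eq (support_decomp W hw)]
          exact List.getElem_append_left (show 1 < p1.support.length by omega)
        rw [e1, e2]
    -- the new transition
    have hz1 : 1 < R.support.length := by omega
    set z := R.support[1]'hz1 with hz
    have hR0 : R.support[0]'(by omega) = w := by
      have := Walk.head_support R
      rw [List.head_eq_getElem] at this
      exact this
    have hwz : G.Adj w z := by
      have := walk_adj_index R 0 hz1
      rwa [hR0] at this
    classical
    set Tn := if u = z then Ti else insert (transitionOf u w z) Ti with hTn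
    have hTiTn : (Ti : Set (Sym2 (Sym2 V))) ⊆ ↑Tn := by
      rw [hTn]
      split
      · exact subset_rfl
      · exact fun t ht => by simp [Finset.mem_insert, Finset.mem_coe.mp ht]
    have hTncard : Tn.card ≤ Ti.card + 1 := by
      rw [hTn]; split
      · omega
      · exact Finset.card_insert_le _ _
    have hTntr : ∀ t ∈ Tn, G.IsTransition t := by
      rw [hTn]
      split
      · exact hTitr
      · rename_i huz
        intro t ht
        rcases Finset.mem_insert.mp ht with rfl | ht
        · exact ⟨u, w, z, huw, hwz, huz, rfl⟩
        · exact hTitr t ht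
    set Q := Walk.cons huw R with hQ
    have hQsup : Q.support = [u, w] ++ R.support.tail := by
      rw [hQ, Walk.support_cons]
      conv_lhs => rw [← List.cons_head_tail (Walk.support_ne_nil R),
        Walk.head_support]
      simp
    have hQcompat : TCompatible ↑Tn Q.support := by
      rw [hQsup]
      refine TCompatible.glue (TCompatible.short (by simp)) (hcompatR.mono hTiTn)
        (by simp) (Walk.support_ne_nil _) ?_ ?_
      · rw [Walk.head_support]; rfl
      · intro ha hb
        have hhead : R.support.head (Walk.support_ne_nil R) = w := Walk.head_support R
        have e3 : ([u, w] : List V)[([u,w] : List V).length - 2]'(by simp) = u := rfl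
        rw [e3, hhead]
        have e4 : R.support[1]'(by omega) = z := rfl
        rw [e4]
        rw [hTn]
        split
        · rename_i h'; exact Or.inl h'
        · right; simp
    refine ⟨Tn, by omega, hTntr, u, b, Q, ?_, hQcompat⟩
    intro x hx
    by_cases hxu : x = u
    · subst hxu; exact Walk.start_mem_support Q
    · have : x ∈ S' := Finset.mem_sdiff.mpr ⟨hx, by simpa using hxu⟩
      have hxW : x ∈ W.support := hWcover x this
      have : x ∈ R.support := Walk.subset_support_append_right _ _ hxW
      rw [hQ, Walk.support_cons]
      exact List.mem_cons_of_mem _ this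

lemma dirA [DecidableEq V] {H : Finset (Finset V)} (hH : G.ConnectingHypergraph H) :
    ∃ T : Finset (Sym2 (Sym2 V)), G.ConnectingTransitionSet T ∧ T.card ≤ hcost H := by
  classical
  have hch : ∀ E : Finset V, ∃ TE : Finset (Sym2 (Sym2 V)), E ∈ H →
      (TE.card + 2 ≤ E.card ∧ (∀ t ∈ TE, G.IsTransition t) ∧
        ∃ a b, ∃ p : G.Walk a b, (∀ x ∈ E, x ∈ p.support) ∧ TCompatible ↑TE p.support) := by
    intro E
    by_cases hE : E ∈ H
    · obtain ⟨T, h1, h2, h3⟩ :=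
        exists_spanning_walk E.card E rfl (hH.1 E hE).1 (hH.1 E hE).2
      exact ⟨T, fun _ => ⟨h1, h2, h3⟩⟩
    · exact ⟨∅, fun h => absurd h hE⟩
  choose f hf using hch
  refine ⟨H.biUnion f, ⟨?_, ?_⟩, ?_⟩
  · intro t ht
    obtain ⟨E, hE, htE⟩ := Finset.mem_biUnion.mp ht
    exact (hf E hE).2.1 t htE
  · intro u v
    by_cases huv : u = v
    · subst huv
      exact ⟨Walk.nil, TCompatible.short (by simp)⟩
    by_cases hadj : G.Adj u v
    · exact ⟨Walk.cons hadj Walk.nil, TCompatible.short (by simp)⟩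
    obtain ⟨E, hE, huE, hvE⟩ := hH.2 u v huv hadj
    obtain ⟨_, _, a, b, p, hcover, hcompat⟩ := hf E hE
    obtain ⟨q, hq⟩ := exists_compatible_subwalk p hcompat (hcover u huE) (hcover v hvE)
    refine ⟨q, hq.mono ?_⟩
    intro t ht
    exact Finset.mem_coe.mpr (Finset.mem_biUnion.mpr ⟨E, hE, Finset.mem_coe.mp ht⟩)
  · calc (H.biUnion f).card ≤ ∑ E ∈ H, (f E).card := Finset.card_biUnion_le
    _ ≤ ∑ E ∈ H, (E.card - 2) := by
        refine Finset.sum_le_sum ?_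
        intro E hE
        have := (hf E hE).1
        omega
    _ = hcost H := rfl

lemma exists_adj_of_mem {α : Type*} {G' : SimpleGraph α} {S : Set α}
    (h : (G'.induce S).Connected) {a b : α} (ha : a ∈ S) (hb : b ∈ S) (hab : a ≠ b) :
    ∃ c, G'.Adj a c ∧ c ∈ S := by
  obtain ⟨p, hp⟩ := walk_in_of_induce_connected h ha hb
  cases p with
  | nil => exact absurd rfl hab
  | cons h' q =>
    rename_i c
    exact ⟨c, h', hp c (by simp [Walk.support_cons, Walk.start_mem_support])⟩

lemma lemmaK {α : Type*} [DecidableEq α] (Γ : SimpleGraph (Sym2 α))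
    (hshare : ∀ e f, Γ.Adj e f → ∃ x, x ∈ e ∧ x ∈ f) :
    ∀ (n : ℕ) (E' : Finset (Sym2 α)) (A : Finset α) (B : Finset (Sym2 (Sym2 α))),
      E'.card = n → E'.Nonempty → (∀ e ∈ E', ¬ e.IsDiag) →
      (Γ.induce (↑E' : Set (Sym2 α))).Connected →
      (∀ x, x ∈ A ↔ ∃ e ∈ E', x ∈ e) →
      (∀ t, t ∈ B ↔ ∃ e f, Γ.Adj e f ∧ e ∈ E' ∧ f ∈ E' ∧ t = s(e, f)) →
      A.card ≤ B.card + 2 := by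
  intro n
  induction n using Nat.strong_induction_on with
  | _ n IH =>
  intro E' A B hn hne hdiag hconn hA hB
  rcases Nat.lt_or_ge n 2 with hn1 | hn2
  · -- E' is a single nondiagonal edge
    obtain ⟨e, he⟩ := hne
    have hcard1 : E'.card = 1 := by
      have : 1 ≤ E'.card := Finset.card_pos.mpr ⟨e, he⟩
      omega
    obtain ⟨e', hE'⟩ := Finset.card_eq_one.mp hcard1
    induction e' using Sym2.ind with
    | _ x y =>
    have hsub : A ⊆ {x, y} := by
      intro z hz
      obtain ⟨f, hf, hzf⟩ := (hA z).mp hz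
      rw [hE', Finset.mem_singleton] at hf
      subst hf
      rcases Sym2.mem_iff.mp hzf with rfl | rfl <;> simp
    calc A.card ≤ ({x, y} : Finset α).card := Finset.card_le_card hsub
      _ ≤ 2 := Finset.card_insert_le _ _ |>.trans (by simp)
      _ ≤ B.card + 2 := by omega
  · -- inductive step
    obtain ⟨e, heE, hconn'⟩ := exists_noncut (by omega) hconn
    obtain ⟨f0, hf0, hf0e⟩ : ∃ f0 ∈ E', f0 ≠ e := by
      obtain ⟨x1, hx1, x2, hx2, hx12⟩ := Finset.one_lt_card.mp (show 1 < E'.card by omega)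
      by_cases h1 : x1 = e
      · exact ⟨x2, hx2, by rw [← h1]; exact hx12.symm⟩
      · exact ⟨x1, hx1, h1⟩
    obtain ⟨g, hadj, hgE⟩ := exists_adj_of_mem hconn (Finset.mem_coe.mpr heE)
      (Finset.mem_coe.mpr hf0) (Ne.symm hf0e)
    have hge : g ≠ e := fun h => by rw [h] at hadj; exact Γ.irrefl hadj
    have hgE' : g ∈ E' \ {e} := Finset.mem_sdiff.mpr ⟨Finset.mem_coe.mp hgE, by simpa using hge⟩
    classical
    set A' := A.filter (fun x => ∃ e' ∈ E' \ {e}, x ∈ e') with hA'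
    set B' := B.filter (fun t => ∀ e' ∈ t, e' ∈ E' \ {e}) with hB'
    have hA'char : ∀ x, x ∈ A' ↔ ∃ e' ∈ E' \ {e}, x ∈ e' := by
      intro x
      rw [hA', Finset.mem_filter]
      constructor
      · exact fun h => h.2
      · rintro ⟨e', he', hxe'⟩
        exact ⟨(hA x).mpr ⟨e', (Finset.mem_sdiff.mp he').1, hxe'⟩, e', he', hxe'⟩
    have hB'char : ∀ t, t ∈ B' ↔
        ∃ e1 f1, Γ.Adj e1 f1 ∧ e1 ∈ E' \ {e} ∧ f1 ∈ E' \ {e} ∧ t = s(e1, f1) := by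
      intro t
      rw [hB', Finset.mem_filter]
      constructor
      · rintro ⟨htB, hall⟩
        obtain ⟨e1, f1, hadj1, he1, hf1, rfl⟩ := (hB t).mp htB
        exact ⟨e1, f1, hadj1, hall e1 (Sym2.mem_mk_left _ _),
          hall f1 (Sym2.mem_mk_right _ _), rfl⟩
      · rintro ⟨e1, f1, hadj1, he1, hf1, rfl⟩
        refine ⟨(hB _).mpr ⟨e1, f1, hadj1, (Finset.mem_sdiff.mp he1).1,
          (Finset.mem_sdiff.mp hf1).1, rfl⟩, ?_⟩
        intro e' he'
        rcases Sym2.mem_iff.mp he' with rfl | rfl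
        · exact he1
        · exact hf1
    have hIH : A'.card ≤ B'.card + 2 := by
      refine IH (n - 1) (by omega) (E' \ {e}) A' B' ?_ ⟨g, hgE'⟩
        (fun e' he' => hdiag e' (Finset.mem_sdiff.mp he').1) hconn' hA'char hB'char
      rw [Finset.card_sdiff_of_subset (Finset.singleton_subset_iff.mpr heE)]
      simp [hn]
    -- A.card ≤ A'.card + 1
    obtain ⟨xs, hxse, hxsg⟩ := hshare e g hadj
    obtain ⟨y, hey⟩ := Sym2.mem_iff_exists.mp hxse
    have hAsub : A ⊆ insert y A' := by
      intro z hz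
      obtain ⟨e1, he1, hze1⟩ := (hA z).mp hz
      by_cases h1 : e1 = e
      · subst h1
        rw [hey] at hze1
        rcases Sym2.mem_iff.mp hze1 with rfl | rfl
        · exact Finset.mem_insert_of_mem ((hA'char z).mpr ⟨g, hgE', hxsg⟩)
        · exact Finset.mem_insert_self _ _
      · exact Finset.mem_insert_of_mem ((hA'char z).mpr
          ⟨e1, Finset.mem_sdiff.mpr ⟨he1, by simpa using h1⟩, hze1⟩)
    have hAcard : A.card ≤ A'.card + 1 :=
      (Finset.card_le_card hAsub).trans (Finset.card_insert_le _ _)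
    -- B'.card + 1 ≤ B.card
    have hegB : s(e, g) ∈ B := (hB _).mpr ⟨e, g, hadj, heE, (Finset.mem_sdiff.mp hgE').1, rfl⟩
    have hB'sub : B' ⊆ B.erase s(e, g) := by
      intro t ht
      obtain ⟨htB, hall⟩ := Finset.mem_filter.mp ht
      refine Finset.mem_erase.mpr ⟨?_, htB⟩
      intro hteq
      have : e ∈ t := hteq ▸ Sym2.mem_mk_left _ _
      have := hall e this
      simp at this
    have hBcard : B'.card + 1 ≤ B.card := by
      have h1 := Finset.card_le_card hB'sub
      have h2 := Finset.card_erase_of_mem hegB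
      have h3 : 1 ≤ B.card := Finset.card_pos.mpr ⟨_, hegB⟩
      omega
    omega

lemma adj_of_mem_edge {f : Sym2 V} (hf : f ∈ G.edgeSet) {z x : V}
    (hz : z ∈ f) (hx : x ∈ f) (hzx : z ≠ x) : G.Adj z x := by
  induction f using Sym2.ind with
  | _ v1 v2 =>
    rw [Sym2.mem_iff] at hz hx
    rw [SimpleGraph.mem_edgeSet] at hf
    rcases hz with rfl | rfl <;> rcases hx with rfl | rfl
    · exact absurd rfl hzx
    · exact hf
    · exact hf.symm
    · exact absurd rfl hzx

lemma sum_image_le' {α β : Type*} [DecidableEq α] [DecidableEq β] (s : Finset α) (f : α → β)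
    (g : β → ℕ) : ∑ b ∈ s.image f, g b ≤ ∑ a ∈ s, g (f a) := by
  induction s using Finset.induction with
  | empty => simp
  | @insert a s ha IH =>
    rw [Finset.image_insert, Finset.sum_insert ha]
    by_cases h : f a ∈ s.image f
    · rw [Finset.insert_eq_self.mpr h]
      omega
    · rw [Finset.sum_insert h]
      omega

lemma dirB [Fintype V] [DecidableEq V] {T : Finset (Sym2 (Sym2 V))}
    (hT : G.ConnectingTransitionSet T) :
    ∃ H : Finset (Finset V), G.ConnectingHypergraph H ∧ hcost H ≤ T.card := by
  classical
  obtain ⟨htr, hTc⟩ := hT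
  set Γ : SimpleGraph (Sym2 V) :=
    { Adj := fun e f => e ≠ f ∧ s(e, f) ∈ T
      symm := by
        constructor
        intro e f h
        exact ⟨h.1.symm, by rw [Sym2.eq_swap]; exact h.2⟩
      loopless := ⟨fun e h => h.1 rfl⟩ } with hΓ
  have hAdjT : ∀ e f, Γ.Adj e f ↔ e ≠ f ∧ s(e, f) ∈ T := fun e f => Iff.rfl
  have hAdjInfo : ∀ e f, Γ.Adj e f →
      e ∈ G.edgeSet ∧ f ∈ G.edgeSet ∧ ∃ x, x ∈ e ∧ x ∈ f := by
    intro e f h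
    obtain ⟨a, b, c, hab, hbc, hac, heq⟩ := htr s(e, f) h.2
    have heq' : s(e, f) = s(s(a,b), s(b,c)) := heq
    rw [Sym2.eq_iff] at heq'
    rcases heq' with ⟨h1, h2⟩ | ⟨h1, h2⟩
    · subst h1; subst h2
      exact ⟨hab, hbc, b, Sym2.mem_mk_right _ _, Sym2.mem_mk_left _ _⟩
    · subst h1; subst h2
      exact ⟨hbc, hab, b, Sym2.mem_mk_left _ _, Sym2.mem_mk_right _ _⟩
  set F : Sym2 V → Finset V := fun e =>
    Finset.univ.filter (fun x => ∃ f, Γ.Reachable e f ∧ x ∈ f ∧ f ∈ G.edgeSet) with hF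
  have hFmem : ∀ e x, x ∈ F e ↔ ∃ f, Γ.Reachable e f ∧ x ∈ f ∧ f ∈ G.edgeSet := by
    intro e x
    rw [hF]
    simp
  -- connectivity of the induced graphs
  have hFconn : ∀ x0 y0, G.Adj x0 y0 →
      (G.induce (↑(F s(x0, y0)) : Set V)).Connected := by
    intro x0 y0 he
    have hx0F : x0 ∈ F s(x0, y0) :=
      (hFmem _ _).mpr ⟨s(x0, y0), Reachable.refl _, Sym2.mem_mk_left _ _,
        (SimpleGraph.mem_edgeSet G).mpr he⟩
    have hy0F : y0 ∈ F s(x0, y0) :=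
      (hFmem _ _).mpr ⟨s(x0, y0), Reachable.refl _, Sym2.mem_mk_right _ _,
        (SimpleGraph.mem_edgeSet G).mpr he⟩
    have main : ∀ (f g : Sym2 V) (w : Γ.Walk f g), g = s(x0, y0) → ∀ (z : V), z ∈ f →
        ∃ p : G.Walk x0 z, ∀ y ∈ p.support, y ∈ (↑(F s(x0, y0)) : Set V) := by
      intro f g w
      induction w with
      | nil =>
        rintro rfl z hz
        rcases Sym2.mem_iff.mp hz with rfl | rfl
        · exact ⟨Walk.nil, by
            intro y hy
            simp only [Walk.support_nil, List.mem_singleton] at hy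
            subst hy
            exact Finset.mem_coe.mpr hx0F⟩
        · exact ⟨Walk.cons he Walk.nil, by
            intro y hy
            simp only [Walk.support_cons, Walk.support_nil, List.mem_cons,
              List.mem_singleton] at hy
            rcases hy with rfl | rfl | h
            · exact Finset.mem_coe.mpr hx0F
            · exact Finset.mem_coe.mpr hy0F
            · exact absurd h (by simp)⟩
      | @cons f f' _ hadj q IHq =>
        rintro rfl z hz
        obtain ⟨hfE, hf'E, xs, hxsf, hxsf'⟩ := hAdjInfo f f' hadj
        obtain ⟨P, hP⟩ := IHq rfl xs hxsf'
        have hreach : Γ.Reachable s(x0, y0) f := (Reachable.symm ⟨Walk.cons hadj q⟩)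
        have hzF : z ∈ F s(x0, y0) := (hFmem _ _).mpr ⟨f, hreach, hz, hfE⟩
        by_cases hzx : z = xs
        · subst hzx; exact ⟨P, hP⟩
        · have hadj2 : G.Adj xs z :=
            (adj_of_mem_edge hfE hz hxsf hzx).symm
          refine ⟨P.concat hadj2, ?_⟩
          intro y hy
          rw [Walk.support_concat] at hy
          simp only [List.concat_eq_append, List.mem_append, List.mem_singleton] at hy
          rcases hy with h | rfl
          · exact hP y h
          · exact Finset.mem_coe.mpr hzF
    refine induce_connected_of_walks (Finset.mem_coe.mpr hx0F) ?_
    intro x hx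
    obtain ⟨f, hreach, hxf, hfE⟩ := (hFmem _ _).mp (Finset.mem_coe.mp hx)
    obtain ⟨w⟩ := hreach.symm
    exact main f _ w rfl x hxf
  -- covering pairs
  have hcover : ∀ u v : V, u ≠ v → ¬G.Adj u v →
      ∃ e ∈ G.edgeSet, u ∈ F e ∧ v ∈ F e := by
    intro u v huv hnadj
    obtain ⟨p, hp⟩ := hTc u v
    have hm : 2 ≤ p.support.length := by
      rw [Walk.length_support]
      by_contra hcon
      push_neg at hcon
      have : p.length = 0 := by omega
      exact huv (Walk.eq_of_length_eq_zero this)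
    have hl0 : p.support[0]'(by omega) = u := by
      rw [← List.head_eq_getElem]
      exact Walk.head_support p
    have hlast : p.support[p.support.length - 1]'(by omega) = v := by
      rw [← List.getLast_eq_getElem]
      exact Walk.getLast_support p
    have hreach : ∀ (i : ℕ) (hi : i + 1 < p.support.length),
        Γ.Reachable (s(p.support[0]'(by omega), p.support[1]'(by omega)))
          (s(p.support[i]'(by omega), p.support[i+1]'hi)) := by
      intro i
      induction i with
      | zero => intro hi; exact Reachable.refl _
      | succ j IHj =>
        intro hi
        have h1 := IHj (by omega)
        refine h1.trans ?_
        have hc := hp j (by omega)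
        have hidx : p.support[j+1+1]'hi = p.support[j+2]'(by omega) :=
          getElem_idx_congr (by omega)
        rcases hc with heq | htm
        · have hswap : s(p.support[j+1]'(by omega), p.support[j+1+1]'hi) =
              s(p.support[j]'(by omega), p.support[j+1]'(by omega)) := by
            rw [hidx, ← heq, Sym2.eq_swap]
          rw [hswap]
        · by_cases heq2 : s(p.support[j]'(by omega), p.support[j+1]'(by omega)) =
              s(p.support[j+1]'(by omega), p.support[j+1+1]'hi)
          · rw [← heq2]
          · refine SimpleGraph.Adj.reachable ?_
            refine ⟨heq2, ?_⟩
            rw [hidx]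
            exact Finset.mem_coe.mp htm
    have hadj01 : G.Adj (p.support[0]'(by omega)) (p.support[1]'(by omega)) :=
      walk_adj_index p 0 (by omega)
    refine ⟨s(p.support[0]'(by omega), p.support[1]'(by omega)),
      (SimpleGraph.mem_edgeSet G).mpr hadj01, ?_, ?_⟩
    · refine (hFmem _ _).mpr ⟨_, Reachable.refl _, ?_, (SimpleGraph.mem_edgeSet G).mpr hadj01⟩
      exact Sym2.mem_iff.mpr (Or.inl hl0.symm)
    · have hlast2 : p.support.length - 2 + 1 < p.support.length := by omega
      have hr := hreach (p.support.length - 2) hlast2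
      refine (hFmem _ _).mpr ⟨s(p.support[p.support.length - 2]'(by omega),
        p.support[p.support.length - 2 + 1]'hlast2), hr, ?_, ?_⟩
      · have hvv : p.support[p.support.length - 2 + 1]'hlast2 = v :=
          (getElem_idx_congr (by omega)).trans hlast
        exact Sym2.mem_iff.mpr (Or.inr hvv.symm)
      · exact (SimpleGraph.mem_edgeSet G).mpr (walk_adj_index p _ hlast2)
  -- components machinery
  set mkC : Sym2 V → Γ.ConnectedComponent := Γ.connectedComponentMk with hmkC
  set EF : Finset (Sym2 V) := G.edgeSet.toFinite.toFinset with hEF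
  have hEFmem : ∀ e, e ∈ EF ↔ e ∈ G.edgeSet := fun e => Set.Finite.mem_toFinset _
  set F' : Γ.ConnectedComponent → Finset V := fun C =>
    Finset.univ.filter (fun x => ∃ f, mkC f = C ∧ x ∈ f ∧ f ∈ G.edgeSet) with hF'
  have hF'mem : ∀ C x, x ∈ F' C ↔ ∃ f, mkC f = C ∧ x ∈ f ∧ f ∈ G.edgeSet := by
    intro C x
    rw [hF']
    simp
  have hFF' : ∀ e, F e = F' (mkC e) := by
    intro e
    ext x
    rw [hFmem, hF'mem]
    constructor
    · rintro ⟨f, hr, hx, hf⟩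
      exact ⟨f, ConnectedComponent.eq.mpr hr.symm, hx, hf⟩
    · rintro ⟨f, hC, hx, hf⟩
      exact ⟨f, (ConnectedComponent.eq.mp hC).symm, hx, hf⟩
  set H := EF.image F with hH
  refine ⟨H, ⟨?_, ?_⟩, ?_⟩
  · intro E hE
    obtain ⟨e, heEF, rfl⟩ := Finset.mem_image.mp hE
    have heS : e ∈ G.edgeSet := (hEFmem e).mp heEF
    clear hE heEF
    obtain ⟨x, y, hadj, rfl⟩ : ∃ x y, G.Adj x y ∧ e = s(x, y) := by
      revert heS
      induction e using Sym2.ind with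
      | _ x y => exact fun h => ⟨x, y, (SimpleGraph.mem_edgeSet G).mp h, rfl⟩
    have hx : x ∈ F s(x, y) :=
      (hFmem _ _).mpr ⟨s(x, y), Reachable.refl _, Sym2.mem_mk_left _ _, heS⟩
    have hy : y ∈ F s(x, y) :=
      (hFmem _ _).mpr ⟨s(x, y), Reachable.refl _, Sym2.mem_mk_right _ _, heS⟩
    constructor
    · have := Finset.one_lt_card.mpr ⟨x, hx, y, hy, hadj.ne⟩
      omega
    · exact hFconn x y hadj
  · intro u v huv hnadj
    obtain ⟨e, heS, hu, hv⟩ := hcover u v huv hnadj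
    exact ⟨F e, Finset.mem_image.mpr ⟨e, (hEFmem e).mpr heS, rfl⟩, hu, hv⟩
  · -- cost bound
    set comps := EF.image mkC with hcomps
    set TC : Γ.ConnectedComponent → Finset (Sym2 (Sym2 V)) := fun C =>
      T.filter (fun t => ∃ e1 f1, Γ.Adj e1 f1 ∧ t = s(e1, f1) ∧ mkC e1 = C) with hTC
    have hHimage : H = comps.image F' := by
      rw [hH, hcomps, Finset.image_image]
      exact Finset.image_congr (fun e _ => hFF' e)
    have hpercomp : ∀ C ∈ comps, (F' C).card - 2 ≤ (TC C).card := by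
      intro C hC
      obtain ⟨e, heEF, heC⟩ := Finset.mem_image.mp hC
      set EC := EF.filter (fun f => mkC f = C) with hEC
      have heEC : e ∈ EC := Finset.mem_filter.mpr ⟨heEF, heC⟩
      have hconnC : (Γ.induce (↑EC : Set (Sym2 V))).Connected := by
        refine induce_connected_of_walks (Finset.mem_coe.mpr heEC) ?_
        intro f hf
        obtain ⟨hfEF, hfC⟩ := Finset.mem_filter.mp (Finset.mem_coe.mp hf)
        have hre : Γ.Reachable e f := ConnectedComponent.eq.mp (heC.trans hfC.symm)
        obtain ⟨w⟩ := hre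
        refine ⟨w, ?_⟩
        intro y hy
        have hrey : Γ.Reachable e y := ⟨w.takeUntil y hy⟩
        have hyC : mkC y = C := (ConnectedComponent.eq.mpr hrey.symm).trans heC
        have hyEF : y ∈ EF := by
          by_cases hye : y = e
          · subst hye; exact heEF
          · cases hw : (w.takeUntil y hy).reverse with
            | nil => exact absurd rfl hye
            | cons hadj q => exact (hEFmem y).mpr (hAdjInfo _ _ hadj).1
        exact Finset.mem_coe.mpr (Finset.mem_filter.mpr ⟨hyEF, hyC⟩)
      have hKres : (F' C).card ≤ (TC C).card + 2 := by
        refine lemmaK Γ (fun e' f' h => (hAdjInfo e' f' h).2.2) EC.card EC (F' C) (TC C)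
          rfl ⟨e, heEC⟩ ?_ hconnC ?_ ?_
        · intro f hf
          exact G.not_isDiag_of_mem_edgeSet ((hEFmem f).mp (Finset.mem_filter.mp hf).1)
        · intro x
          rw [hF'mem]
          constructor
          · rintro ⟨f, hfC, hx, hfS⟩
            exact ⟨f, Finset.mem_filter.mpr ⟨(hEFmem f).mpr hfS, hfC⟩, hx⟩
          · rintro ⟨f, hfEC, hx⟩
            obtain ⟨h1, h2⟩ := Finset.mem_filter.mp hfEC
            exact ⟨f, h2, hx, (hEFmem f).mp h1⟩
        · intro t
          rw [hTC]
          constructor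
          · intro ht
            obtain ⟨htT, e1, f1, hadj1, rfl, he1C⟩ := Finset.mem_filter.mp ht
            have infos := hAdjInfo e1 f1 hadj1
            have hf1C : mkC f1 = C :=
              (ConnectedComponent.eq.mpr hadj1.symm.reachable).trans he1C
            exact ⟨e1, f1, hadj1, Finset.mem_filter.mpr ⟨(hEFmem e1).mpr infos.1, he1C⟩,
              Finset.mem_filter.mpr ⟨(hEFmem f1).mpr infos.2.1, hf1C⟩, rfl⟩
          · rintro ⟨e1, f1, hadj1, he1, hf1, rfl⟩
            exact Finset.mem_filter.mpr ⟨hadj1.2, e1, f1, hadj1, rfl,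
              (Finset.mem_filter.mp he1).2⟩
      omega
    have hdisj : ∀ C1 ∈ comps, ∀ C2 ∈ comps, C1 ≠ C2 → Disjoint (TC C1) (TC C2) := by
      intro C1 _ C2 _ hne
      refine Finset.disjoint_left.mpr ?_
      intro t ht1 ht2
      obtain ⟨_, e1, f1, ha1, heq1, hC1⟩ := Finset.mem_filter.mp ht1
      obtain ⟨_, e2, f2, ha2, heq2, hC2⟩ := Finset.mem_filter.mp ht2
      have heq : s(e1, f1) = s(e2, f2) := heq1 ▸ heq2
      have hee : mkC e1 = mkC e2 := by
        rcases Sym2.eq_iff.mp heq with ⟨h1, _⟩ | ⟨h1, h2⟩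
        · rw [h1]
        · rw [h1]
          exact ConnectedComponent.eq.mpr ha2.symm.reachable
      exact hne ((hC1.symm.trans hee).trans hC2)
    calc hcost H = ∑ A ∈ comps.image F', (A.card - 2) := by rw [hHimage]; rfl
      _ ≤ ∑ C ∈ comps, ((F' C).card - 2) := sum_image_le' comps F' (fun A => A.card - 2)
      _ ≤ ∑ C ∈ comps, (TC C).card := Finset.sum_le_sum hpercomp
      _ = (comps.biUnion TC).card := (Finset.card_biUnion hdisj).symm
      _ ≤ T.card := Finset.card_le_card (Finset.biUnion_subset.mpr
          (fun C _ => Finset.filter_subset _ _))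


/-- The quantity τ(G): the sum over co-connected components `C` of `G` with `|C| ≥ 2`
of `|C| − 2` if `G[C]` is connected and `|C| − 1` otherwise. -/
noncomputable def tau {V : Type*} [Fintype V] (G : SimpleGraph V) : ℕ := by
  classical
  haveI : Fintype Gᶜ.ConnectedComponent := Fintype.ofFinite _
  exact ∑ C : Gᶜ.ConnectedComponent,
    if 2 ≤ C.supp.ncard then
      (if (G.induce C.supp).Connected then C.supp.ncard - 2 else C.supp.ncard - 1)
    else 0

/-- For every connected graph with at least 2 vertices, the minimum size of a connecting
transition set equals the minimum cost of a connecting hypergraph. -/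
theorem stmt8 {V : Type*} [Fintype V] [DecidableEq V] (G : SimpleGraph V)
    (hc : G.Connected) (h2 : 2 ≤ Fintype.card V) :
    sInf {n : ℕ | ∃ T : Finset (Sym2 (Sym2 V)),
        G.ConnectingTransitionSet T ∧ T.card = n} =
    sInf {n : ℕ | ∃ H : Finset (Finset V),
        G.ConnectingHypergraph H ∧ hcost H = n} := by
  classical
  have hH0 : G.ConnectingHypergraph {Finset.univ} := by
    constructor
    · intro E hE
      rw [Finset.mem_singleton] at hE
      subst hE
      constructor
      · rwa [Finset.card_univ]
      · have hx0 : Nonempty V := hc.nonempty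
        obtain ⟨x0⟩ := hx0
        refine induce_connected_of_walks (x0 := x0) (by simp) ?_
        intro x _
        obtain ⟨p⟩ := hc.preconnected x0 x
        exact ⟨p, fun y _ => by simp⟩
    · intro u v _ _
      exact ⟨Finset.univ, Finset.mem_singleton_self _, Finset.mem_univ _, Finset.mem_univ _⟩
  have hSHne : {n : ℕ | ∃ H : Finset (Finset V),
      G.ConnectingHypergraph H ∧ hcost H = n}.Nonempty :=
    ⟨hcost {Finset.univ}, {Finset.univ}, hH0, rfl⟩
  have hSTne : {n : ℕ | ∃ T : Finset (Sym2 (Sym2 V)),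
      G.ConnectingTransitionSet T ∧ T.card = n}.Nonempty := by
    obtain ⟨T0, hT0, _⟩ := dirA hH0
    exact ⟨T0.card, T0, hT0, rfl⟩
  apply le_antisymm
  · obtain ⟨H, hH, hHeq⟩ := Nat.sInf_mem hSHne
    obtain ⟨T, hTcts, hTle⟩ := dirA hH
    refine le_trans (Nat.sInf_le ⟨T, hTcts, rfl⟩) ?_
    rw [← hHeq]
    exact hTle
  · obtain ⟨T, hTcts, hTeq⟩ := Nat.sInf_mem hSTne
    obtain ⟨H, hHch, hHle⟩ := dirB hTcts
    refine le_trans (Nat.sInf_le ⟨H, hHch, rfl⟩) ?_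
    rw [← hTeq]
    exact hHle
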